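/- There exists an absolute constant C > 0 such that the following holds. Let A' ⊂ ℤ\{0} be a finite symmetric set and let L > 0 satisfy 1̂_{A'}(x) + L ≥ 0 for all x ∈ 𝕋. Let t ∈ ℤ\{0}, and set A'_t := A' ∩ (A'+t), B'_t := A'_t \ (−A'_t), and C'_t := (A'+t) \ (A' ∪ (A'−t)). Then ‖1̂_{B'_t} − 1̂_{−B'_t}‖₁ ≤ C·L² and ‖1̂_{C'_t} − 1̂_{−C'_t}‖₁ ≤ C·L². -/

import Mathlib

/-- `e(x) = e^{2πix}`. -/
noncomputable def eC (x : ℝ) : ℂ := Complex.exp (2 * Real.pi * Complex.I * x)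

/-- `1̂_A(x) = ∑_{a ∈ A} e(ax)`. -/
noncomputable def fhat (A : Finset ℤ) (x : ℝ) : ℂ := ∑ a ∈ A, eC ((a : ℝ) * x)

/-- The translate `A + t`. -/
def shiftS (A : Finset ℤ) (t : ℤ) : Finset ℤ := A.image (· + t)

/-- The reflection `-A`. -/
def negS (A : Finset ℤ) : Finset ℤ := A.image (fun a => -a)

/-- `B'_t = (A' ∩ (A'+t)) \ (-(A' ∩ (A'+t)))`. -/
def Bt (A' : Finset ℤ) (t : ℤ) : Finset ℤ :=
  (A' ∩ shiftS A' t) \ negS (A' ∩ shiftS A' t)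

/-- `C'_t = (A'+t) \ (A' ∪ (A'−t))`. -/
def Ct (A' : Finset ℤ) (t : ℤ) : Finset ℤ := shiftS A' t \ (A' ∪ shiftS A' (-t))

open MeasureTheory intervalIntegral Complex Finset

lemma eC_add (x y : ℝ) : eC (x + y) = eC x * eC y := by
  simp only [eC, ← Complex.exp_add]
  congr 1
  push_cast
  ring

lemma eC_eq_exp (c : ℝ) (x : ℝ) : eC (c * x) = Complex.exp ((2 * Real.pi * Complex.I * c) * x) := by
  simp only [eC]; congr 1; push_cast; ring

lemma abs_eC (x : ℝ) : ‖eC x‖ = 1 := by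
  simp [eC, Complex.norm_exp]

lemma continuous_eC_mul (c : ℝ) : Continuous (fun x : ℝ => eC (c * x)) := by
  simp only [eC]
  fun_prop

lemma continuous_fhat (A : Finset ℤ) : Continuous (fhat A) := by
  unfold fhat
  exact continuous_finset_sum _ fun a _ => continuous_eC_mul a

lemma abs_fhat_le (A : Finset ℤ) (x : ℝ) : ‖fhat A x‖ ≤ A.card := by
  have := norm_sum_le (E := ℂ) A (fun a => eC ((a:ℝ) * x))
  simpa [fhat, abs_eC] using this

lemma fhat_periodic (A : Finset ℤ) : Function.Periodic (fhat A) 1 := by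
  intro x
  unfold fhat
  refine Finset.sum_congr rfl fun a _ => ?_
  rw [mul_add, mul_one, eC_add]
  have : eC (a : ℝ) = 1 := by
    rw [show ((a:ℝ)) = (a:ℝ) * 1 by ring, eC_eq_exp]
    rw [show (2 * Real.pi * Complex.I * (a:ℝ)) * (1:ℝ) = (a:ℂ) * (2 * Real.pi * Complex.I) by push_cast; ring]
    exact Complex.exp_int_mul_two_pi_mul_I a
  rw [this, mul_one]

lemma integral_eC (n : ℤ) :
    (∫ x in (0:ℝ)..1, eC ((n : ℝ) * x)) = if n = 0 then 1 else 0 := by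
  by_cases hn : n = 0
  · simp [hn, eC]
  · rw [if_neg hn]
    simp_rw [eC_eq_exp]
    rw [integral_exp_mul_complex (by
      simp only [ne_eq, mul_eq_zero, OfNat.ofNat_ne_zero, false_or, Complex.ofReal_eq_zero,
        Complex.I_ne_zero]
      push_cast
      simp [Real.pi_ne_zero, hn])]
    rw [show (2 * Real.pi * Complex.I * (n:ℝ)) * (1:ℝ) = (n:ℂ) * (2 * Real.pi * Complex.I) by push_cast; ring]
    rw [Complex.exp_int_mul_two_pi_mul_I]
    simp

lemma interset_eq (A : Finset ℤ) (s : ℤ) :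
    A ∩ shiftS A s = (A.filter fun b => b + s ∈ A).image (· + s) := by
  ext n
  simp only [Finset.mem_inter, shiftS, Finset.mem_image, Finset.mem_filter]
  constructor
  · rintro ⟨h1, a, ha, rfl⟩
    exact ⟨a, ⟨ha, h1⟩, rfl⟩
  · rintro ⟨a, ⟨ha, h2⟩, rfl⟩
    exact ⟨h2, a, ha, rfl⟩

lemma conv_eq (A : Finset ℤ) (s : ℤ) (x : ℝ) :
    (∫ y in (0:ℝ)..1, fhat A y * (fhat A (x - y) * eC ((s:ℝ) * (x - y))))
      = fhat (A ∩ shiftS A s) x := by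
  have hexp : ∀ y : ℝ, fhat A y * (fhat A (x - y) * eC ((s:ℝ) * (x - y)))
      = ∑ a ∈ A, ∑ b ∈ A, eC (((b + s : ℤ) : ℝ) * x) * eC (((a - b - s : ℤ) : ℝ) * y) := by
    intro y
    have h1 : fhat A (x - y) * eC ((s:ℝ) * (x - y))
        = ∑ b ∈ A, eC ((b:ℝ) * (x - y)) * eC ((s:ℝ) * (x - y)) := Finset.sum_mul _ _ _
    rw [h1, fhat, Finset.sum_mul_sum]
    refine Finset.sum_congr rfl fun a _ => Finset.sum_congr rfl fun b _ => ?_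
    rw [← eC_add, ← eC_add, ← eC_add]
    congr 1
    push_cast
    ring
  calc (∫ y in (0:ℝ)..1, fhat A y * (fhat A (x - y) * eC ((s:ℝ) * (x - y))))
      = ∑ a ∈ A, ∑ b ∈ A, ∫ y in (0:ℝ)..1,
          eC (((b + s : ℤ) : ℝ) * x) * eC (((a - b - s : ℤ) : ℝ) * y) := by
        simp_rw [hexp]
        rw [intervalIntegral.integral_finset_sum
          (f := fun a y => ∑ b ∈ A, eC (((b + s : ℤ) : ℝ) * x) * eC (((a - b - s : ℤ) : ℝ) * y)) (fun a _ =>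
          ((continuous_finset_sum _ fun b _ => continuous_const.mul
            (continuous_eC_mul _)).intervalIntegrable _ _))]
        exact Finset.sum_congr rfl fun a _ => intervalIntegral.integral_finset_sum
          (fun b _ => ((continuous_const.mul (continuous_eC_mul _)).intervalIntegrable _ _))
    _ = ∑ a ∈ A, ∑ b ∈ A, (if a = b + s then eC (((a:ℤ) : ℝ) * x) else 0) := by
        refine Finset.sum_congr rfl fun a _ => Finset.sum_congr rfl fun b _ => ?_
        rw [intervalIntegral.integral_const_mul, integral_eC]
        by_cases h2 : a = b + s
        · subst h2
          rw [if_pos (by omega), if_pos rfl, mul_one]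
        · rw [if_neg (by omega), if_neg h2, mul_zero]
    _ = ∑ b ∈ A, ∑ a ∈ A, (if a = b + s then eC (((a:ℤ) : ℝ) * x) else 0) := Finset.sum_comm
    _ = ∑ b ∈ A, (if b + s ∈ A then eC (((b + s : ℤ) : ℝ) * x) else 0) := by
        refine Finset.sum_congr rfl fun b _ => ?_
        exact Finset.sum_ite_eq' A (b + s) (fun a => eC (((a:ℤ) : ℝ) * x))
    _ = ∑ b ∈ A.filter (fun b => b + s ∈ A), eC (((b + s : ℤ) : ℝ) * x) := by
        rw [Finset.sum_filter]
    _ = fhat (A ∩ shiftS A s) x := by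
        rw [fhat, interset_eq A s, Finset.sum_image (fun a _ b _ h => by omega)]

lemma negS_eq_self {A : Finset ℤ} (hsym : ∀ a : ℤ, a ∈ A ↔ -a ∈ A) : negS A = A := by
  ext n
  simp only [negS, Finset.mem_image]
  constructor
  · rintro ⟨a, ha, rfl⟩
    exact (hsym a).mp ha
  · intro hn
    exact ⟨-n, (hsym n).mp hn, by ring⟩

lemma fhat_conj (A : Finset ℤ) (hsym : ∀ a : ℤ, a ∈ A ↔ -a ∈ A) (x : ℝ) :
    (fhat A x).im = 0 := by
  rw [← Complex.conj_eq_iff_im]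
  rw [fhat, map_sum]
  have : ∀ a : ℤ, (starRingEnd ℂ) (eC ((a:ℝ) * x)) = eC (((-a : ℤ):ℝ) * x) := by
    intro a
    rw [eC, eC, ← Complex.exp_conj]
    congr 1
    simp only [map_mul, Complex.conj_I, Complex.conj_ofReal, map_ofNat]
    push_cast
    ring
  simp_rw [this]
  calc (∑ a ∈ A, eC (((-a : ℤ):ℝ) * x)) = ∑ n ∈ negS A, eC ((n:ℝ) * x) := by
        rw [negS, Finset.sum_image (fun a _ b _ h => by omega)]
    _ = fhat A x := by rw [negS_eq_self hsym, fhat]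

lemma integral_re_fhat (A : Finset ℤ) (h0 : (0:ℤ) ∉ A) :
    (∫ x in (0:ℝ)..1, (fhat A x).re) = 0 := by
  have h1 : (∫ x in (0:ℝ)..1, fhat A x) = 0 := by
    simp only [fhat]
    rw [intervalIntegral.integral_finset_sum
      (fun a _ => (continuous_eC_mul _).intervalIntegrable _ _)]
    refine Finset.sum_eq_zero fun a ha => ?_
    rw [integral_eC, if_neg (by rintro rfl; exact h0 ha)]
  have h2 : IntegrableOn (fhat A) (Set.Ioc (0:ℝ) 1) volume :=
    (continuous_fhat A).integrableOn_Ioc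
  rw [intervalIntegral.integral_of_le zero_le_one] at h1 ⊢
  have h3 := _root_.integral_re (𝕜 := ℂ) h2
  simp only [RCLike.re_to_complex] at h3
  rw [h3, h1, Complex.zero_re]

lemma l1_fhat_le (A : Finset ℤ) (h0 : (0:ℤ) ∉ A) (hsym : ∀ a : ℤ, a ∈ A ↔ -a ∈ A)
    (L : ℝ) (hLpos : 0 < L) (hL : ∀ x : ℝ, 0 ≤ (fhat A x).re + L) :
    (∫ x in (0:ℝ)..1, ‖fhat A x‖) ≤ 2 * L := by
  have hpt : ∀ x : ℝ, ‖fhat A x‖ ≤ (fhat A x).re + 2 * L := by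
    intro x
    have him := fhat_conj A hsym x
    have habs : ‖fhat A x‖ = |(fhat A x).re| := by
      have : fhat A x = ((fhat A x).re : ℂ) := Complex.ext rfl (by simp [him])
      rw [this, Complex.norm_real]
      simp
    rw [habs]
    rcases abs_cases (fhat A x).re with ⟨h, _⟩ | ⟨h, _⟩
    · rw [h]; linarith
    · rw [h]; linarith [hL x]
  have hc : Continuous fun x : ℝ => (fhat A x).re :=
    Complex.continuous_re.comp (continuous_fhat A)
  calc (∫ x in (0:ℝ)..1, ‖fhat A x‖)
      ≤ ∫ x in (0:ℝ)..1, ((fhat A x).re + 2 * L) := by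
        refine intervalIntegral.integral_mono_on zero_le_one
          ((continuous_norm.comp (continuous_fhat A)).intervalIntegrable _ _)
          ((hc.add continuous_const).intervalIntegrable _ _)
          (fun x _ => hpt x)
    _ = 2 * L := by
        rw [intervalIntegral.integral_add (hc.intervalIntegrable _ _)
          (intervalIntegrable_const), integral_re_fhat A h0, intervalIntegral.integral_const]
        simp

lemma one_le_two_L (A : Finset ℤ) (h0 : (0:ℤ) ∉ A) (hsym : ∀ a : ℤ, a ∈ A ↔ -a ∈ A)
    (hne : A.Nonempty)
    (L : ℝ) (hLpos : 0 < L) (hL : ∀ x : ℝ, 0 ≤ (fhat A x).re + L) : 1 ≤ 2 * L := by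
  obtain ⟨a, ha⟩ := hne
  have key : (∫ x in (0:ℝ)..1, fhat A x * eC (((-a : ℤ):ℝ) * x)) = 1 := by
    have hexp : ∀ x : ℝ, fhat A x * eC (((-a : ℤ):ℝ) * x)
        = ∑ b ∈ A, eC (((b - a : ℤ):ℝ) * x) := by
      intro x
      rw [fhat, Finset.sum_mul]
      refine Finset.sum_congr rfl fun b _ => ?_
      rw [← eC_add]
      congr 1
      push_cast
      ring
    simp_rw [hexp]
    rw [intervalIntegral.integral_finset_sum
      (fun b _ => (continuous_eC_mul _).intervalIntegrable _ _)]
    simp_rw [integral_eC]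
    have : ∀ b ∈ A, (if (b - a : ℤ) = 0 then (1:ℂ) else 0) = if b = a then 1 else 0 := by
      intro b _
      by_cases h : b = a
      · rw [if_pos (by omega), if_pos h]
      · rw [if_neg (by omega), if_neg h]
    rw [Finset.sum_congr rfl this, Finset.sum_ite_eq' A a (fun _ => (1:ℂ)), if_pos ha]
  have h1 : (1:ℝ) ≤ ∫ x in (0:ℝ)..1, ‖fhat A x‖ := by
    have := intervalIntegral.norm_integral_le_integral_norm
      (f := fun x => fhat A x * eC (((-a : ℤ):ℝ) * x)) (μ := volume) (a := (0:ℝ)) (b := 1)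
      zero_le_one
    rw [key] at this
    simp only [norm_one] at this
    calc (1:ℝ) ≤ ∫ x in (0:ℝ)..1, ‖fhat A x * eC (((-a : ℤ):ℝ) * x)‖ := this
      _ = ∫ x in (0:ℝ)..1, ‖fhat A x‖ := by
          refine intervalIntegral.integral_congr fun x _ => ?_
          rw [norm_mul, abs_eC, mul_one]
  linarith [l1_fhat_le A h0 hsym L hLpos hL]

lemma D_bound (A : Finset ℤ) (s : ℤ) :
    (∫ x in (0:ℝ)..1, ‖fhat (A ∩ shiftS A s) x - fhat (A ∩ shiftS A (-s)) x‖)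
      ≤ 2 * (∫ x in (0:ℝ)..1, ‖fhat A x‖) ^ 2 := by
  set g : ℝ → ℝ := fun u => ‖fhat A u‖ with hg
  have hgc : Continuous g := continuous_norm.comp (continuous_fhat A)
  have hgnn : ∀ u, 0 ≤ g u := fun u => norm_nonneg _
  have hgper : Function.Periodic g 1 := fun u => by
    simp only [hg]
    rw [fhat_periodic A u]
  set I1 : ℝ := ∫ x in (0:ℝ)..1, g x with hI1
  have hI1nn : 0 ≤ I1 := intervalIntegral.integral_nonneg zero_le_one fun u _ => hgnn u
  -- pointwise bound
  have hpt : ∀ x : ℝ, ‖fhat (A ∩ shiftS A s) x - fhat (A ∩ shiftS A (-s)) x‖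
      ≤ ∫ y in (0:ℝ)..1, g y * (2 * g (x - y)) := by
    intro x
    have hcont : ∀ c : ℝ, Continuous (fun y : ℝ => fhat A y * (fhat A (x - y) * eC (c * (x - y)))) := by
      intro c
      refine (continuous_fhat A).mul (Continuous.mul ?_ ?_)
      · exact (continuous_fhat A).comp (by fun_prop)
      · exact (continuous_eC_mul c).comp (by fun_prop)
    rw [← conv_eq A s x, ← conv_eq A (-s) x,
      ← intervalIntegral.integral_sub
        (((hcont ((s:ℤ):ℝ))).intervalIntegrable _ _)
        (((hcont ((-s:ℤ):ℝ))).intervalIntegrable _ _)]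
    calc ‖∫ y in (0:ℝ)..1,
            (fhat A y * (fhat A (x - y) * eC ((s:ℝ) * (x - y)))
              - fhat A y * (fhat A (x - y) * eC (((-s : ℤ):ℝ) * (x - y))))‖
        ≤ ∫ y in (0:ℝ)..1, ‖fhat A y * (fhat A (x - y) * eC ((s:ℝ) * (x - y)))
              - fhat A y * (fhat A (x - y) * eC (((-s : ℤ):ℝ) * (x - y)))‖ := by
          exact intervalIntegral.norm_integral_le_integral_norm zero_le_one
      _ ≤ ∫ y in (0:ℝ)..1, g y * (2 * g (x - y)) := by
          refine intervalIntegral.integral_mono_on zero_le_one ?_ ?_ ?_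
          · apply Continuous.intervalIntegrable
            fun_prop
          · apply Continuous.intervalIntegrable
            exact (hgc.mul ((continuous_const.mul (hgc.comp (continuous_const.sub continuous_id)))))
          · intro y _
            have : fhat A y * (fhat A (x - y) * eC ((s:ℝ) * (x - y)))
                - fhat A y * (fhat A (x - y) * eC (((-s : ℤ):ℝ) * (x - y)))
                = fhat A y * (fhat A (x - y) * (eC ((s:ℝ) * (x - y)) - eC (((-s : ℤ):ℝ) * (x - y)))) := by
              ring
            rw [this, norm_mul, norm_mul]
            have h1 : ‖eC ((s:ℝ) * (x - y)) - eC (((-s : ℤ):ℝ) * (x - y))‖ ≤ 2 := by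
              have h2 := norm_sub_le (eC ((s:ℝ) * (x - y))) (eC (((-s : ℤ):ℝ) * (x - y)))
              simp only [abs_eC] at h2
              linarith
            calc g y * (g (x - y) * ‖eC ((s:ℝ) * (x - y)) - eC (((-s : ℤ):ℝ) * (x - y))‖)
                ≤ g y * (g (x - y) * 2) :=
                  mul_le_mul_of_nonneg_left
                    (mul_le_mul_of_nonneg_left h1 (hgnn _)) (hgnn _)
              _ = g y * (2 * g (x - y)) := by ring
  -- inner integral over x is constant I1
  have hinner : ∀ y : ℝ, (∫ x in (0:ℝ)..1, g (x - y)) = I1 := by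
    intro y
    rw [intervalIntegral.integral_comp_sub_right (fun u => g u) y]
    have := hgper.intervalIntegral_add_eq (0 - y) 0
    rw [show (0:ℝ) - y + 1 = 1 - y by ring, zero_add] at this
    rw [this]
  -- Fubini
  have hswap : (∫ x in (0:ℝ)..1, ∫ y in (0:ℝ)..1, g y * (2 * g (x - y))) = 2 * I1 ^ 2 := by
    have hGc : Continuous (Function.uncurry fun x y => g y * (2 * g (x - y))) := by
      apply Continuous.mul
      · exact hgc.comp continuous_snd
      · exact continuous_const.mul (hgc.comp (continuous_fst.sub continuous_snd))
    haveI hfin : IsFiniteMeasure (volume.restrict (Set.Ioc (0:ℝ) 1)) :=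
      ⟨by simp [MeasureTheory.Measure.restrict_apply_univ]⟩
    have hint : Integrable (Function.uncurry fun x y => g y * (2 * g (x - y)))
        ((volume.restrict (Set.Ioc (0:ℝ) 1)).prod (volume.restrict (Set.Ioc (0:ℝ) 1))) := by
      refine (MeasureTheory.integrable_const ((A.card : ℝ) * (2 * A.card))).mono'
        hGc.aestronglyMeasurable (MeasureTheory.ae_of_all _ fun p => ?_)
      have h1 : g p.2 ≤ A.card := abs_fhat_le A _
      have h2 : g (p.1 - p.2) ≤ A.card := abs_fhat_le A _
      simp only [Function.uncurry]
      rw [Real.norm_eq_abs, _root_.abs_of_nonneg (by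
        have := hgnn p.2
        have := hgnn (p.1 - p.2)
        positivity)]
      nlinarith [hgnn p.2, hgnn (p.1 - p.2), Nat.cast_nonneg (α := ℝ) A.card]
    calc (∫ x in (0:ℝ)..1, ∫ y in (0:ℝ)..1, g y * (2 * g (x - y)))
        = ∫ x in Set.Ioc (0:ℝ) 1, (∫ y in Set.Ioc (0:ℝ) 1, g y * (2 * g (x - y))) := by
          rw [intervalIntegral.integral_of_le zero_le_one]
          refine MeasureTheory.setIntegral_congr_fun measurableSet_Ioc fun x _ => ?_
          rw [intervalIntegral.integral_of_le zero_le_one]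
      _ = ∫ y in Set.Ioc (0:ℝ) 1, (∫ x in Set.Ioc (0:ℝ) 1, g y * (2 * g (x - y))) :=
          MeasureTheory.integral_integral_swap hint
      _ = ∫ y in Set.Ioc (0:ℝ) 1, g y * (2 * I1) := by
          refine MeasureTheory.setIntegral_congr_fun measurableSet_Ioc fun y _ => ?_
          rw [← intervalIntegral.integral_of_le zero_le_one,
            intervalIntegral.integral_const_mul, intervalIntegral.integral_const_mul, hinner y]
      _ = 2 * I1 ^ 2 := by
          rw [← intervalIntegral.integral_of_le zero_le_one,
            intervalIntegral.integral_mul_const, hI1]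
          ring
  -- combine
  calc (∫ x in (0:ℝ)..1, ‖fhat (A ∩ shiftS A s) x - fhat (A ∩ shiftS A (-s)) x‖)
      ≤ ∫ x in (0:ℝ)..1, ∫ y in (0:ℝ)..1, g y * (2 * g (x - y)) := by
        refine intervalIntegral.integral_mono_on zero_le_one ?_ ?_ fun x _ => hpt x
        · exact (continuous_norm.comp
            ((continuous_fhat _).sub (continuous_fhat _))).intervalIntegrable _ _
        · apply Continuous.intervalIntegrable
          exact intervalIntegral.continuous_parametric_intervalIntegral_of_continuous'
            (by
              apply Continuous.mul
              · exact hgc.comp continuous_snd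
              · exact continuous_const.mul (hgc.comp (continuous_fst.sub continuous_snd))) _ _
    _ = 2 * I1 ^ 2 := hswap

lemma mem_shiftS {A : Finset ℤ} {t n : ℤ} : n ∈ shiftS A t ↔ n - t ∈ A := by
  simp only [shiftS, Finset.mem_image]
  constructor
  · rintro ⟨a, ha, rfl⟩; simpa using ha
  · intro h; exact ⟨n - t, h, by ring⟩

lemma mem_negS {A : Finset ℤ} {n : ℤ} : n ∈ negS A ↔ -n ∈ A := by
  simp only [negS, Finset.mem_image]
  constructor
  · rintro ⟨a, ha, rfl⟩; simpa using ha
  · intro h; exact ⟨-n, h, by ring⟩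

lemma fhat_sdiff (S T : Finset ℤ) (x : ℝ) :
    fhat (S \ T) x = fhat S x - fhat (S ∩ T) x := by
  rw [fhat, fhat, fhat, ← Finset.sdiff_inter_self_left S T]
  exact Finset.sum_sdiff_eq_sub Finset.inter_subset_left

lemma fhat_union (U V : Finset ℤ) (x : ℝ) :
    fhat (U ∪ V) x = fhat U x + fhat V x - fhat (U ∩ V) x := by
  have h := Finset.sum_union_inter (s₁ := U) (s₂ := V) (f := fun a : ℤ => eC ((a:ℝ) * x))
  rw [fhat, fhat, fhat, fhat]
  linear_combination h

lemma fhat_shiftS (A : Finset ℤ) (t : ℤ) (x : ℝ) :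
    fhat (shiftS A t) x = eC ((t:ℝ) * x) * fhat A x := by
  rw [fhat, shiftS, Finset.sum_image (fun a _ b _ h => by omega), fhat, Finset.mul_sum]
  refine Finset.sum_congr rfl fun a _ => ?_
  rw [← eC_add]
  congr 1
  push_cast
  ring

section Identities
variable {A' : Finset ℤ} (hsym : ∀ a : ℤ, a ∈ A' ↔ -a ∈ A') (t : ℤ)

include hsym

lemma negS_inter_shift :
    negS (A' ∩ shiftS A' t) = A' ∩ shiftS A' (-t) := by
  ext n
  simp only [Finset.mem_inter, mem_negS, mem_shiftS]
  have e2 : -n - t ∈ A' ↔ n - -t ∈ A' := by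
    rw [show -n - t = -(n - -t) by ring]
    exact (hsym (n - -t)).symm
  rw [e2, ← hsym n]

lemma Bt_diff_eq (x : ℝ) :
    fhat (Bt A' t) x - fhat (negS (Bt A' t)) x
      = fhat (A' ∩ shiftS A' t) x - fhat (A' ∩ shiftS A' (-t)) x := by
  set S := A' ∩ shiftS A' t with hS
  have hnegBt : negS (Bt A' t) = negS S \ S := by
    ext n
    simp only [Bt, ← hS, mem_negS, Finset.mem_sdiff, neg_neg]
  have h1 : fhat (Bt A' t) x = fhat S x - fhat (S ∩ negS S) x := fhat_sdiff S (negS S) x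
  have h2 : fhat (negS (Bt A' t)) x = fhat (negS S) x - fhat (negS S ∩ S) x := by
    rw [hnegBt]; exact fhat_sdiff (negS S) S x
  rw [h1, h2, Finset.inter_comm (negS S) S, negS_inter_shift hsym t]
  ring

lemma negS_Ct :
    negS (Ct A' t) = shiftS A' (-t) \ (A' ∪ shiftS A' t) := by
  ext n
  simp only [Ct, mem_negS, Finset.mem_sdiff, Finset.mem_union, mem_shiftS]
  have e1 : -n - t ∈ A' ↔ n - -t ∈ A' := by
    rw [show -n - t = -(n - -t) by ring]; exact (hsym (n - -t)).symm
  have e2 : -n ∈ A' ↔ n ∈ A' := (hsym n).symm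
  have e3 : -n - -t ∈ A' ↔ n - t ∈ A' := by
    rw [show -n - -t = -(n - t) by ring]; exact (hsym (n - t)).symm
  rw [e1, e2, e3]

lemma Ct_diff_eq (x : ℝ) :
    fhat (Ct A' t) x - fhat (negS (Ct A' t)) x
      = (fhat (shiftS A' t) x - fhat (shiftS A' (-t)) x)
        - (fhat (A' ∩ shiftS A' t) x - fhat (A' ∩ shiftS A' (-t)) x) := by
  set P := shiftS A' t with hP
  set Q := shiftS A' (-t) with hQ
  have hdist : ∀ R₁ R₂ : Finset ℤ, fhat (R₁ \ (A' ∪ R₂)) x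
      = fhat R₁ x - (fhat (R₁ ∩ A') x + fhat (R₁ ∩ R₂) x - fhat ((R₁ ∩ A') ∩ (R₁ ∩ R₂)) x) := by
    intro R₁ R₂
    rw [fhat_sdiff, Finset.inter_union_distrib_left, fhat_union]
  have hCt : Ct A' t = P \ (A' ∪ Q) := rfl
  have h1 : fhat (Ct A' t) x
      = fhat P x - (fhat (P ∩ A') x + fhat (P ∩ Q) x - fhat ((P ∩ A') ∩ (P ∩ Q)) x) := by
    rw [hCt]; exact hdist P Q
  have h2 : fhat (negS (Ct A' t)) x
      = fhat Q x - (fhat (Q ∩ A') x + fhat (Q ∩ P) x - fhat ((Q ∩ A') ∩ (Q ∩ P)) x) := by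
    rw [negS_Ct hsym t]; exact hdist Q P
  have e1 : (P ∩ A') ∩ (P ∩ Q) = (Q ∩ A') ∩ (Q ∩ P) := by
    ext n; simp only [Finset.mem_inter]; tauto
  have e2 : P ∩ Q = Q ∩ P := Finset.inter_comm P Q
  have e3 : P ∩ A' = A' ∩ P := Finset.inter_comm P A'
  have e4 : Q ∩ A' = A' ∩ Q := Finset.inter_comm Q A'
  rw [h1, h2, e1, e2, e3, e4]
  ring

end Identities


/-- Improved `L¹`-bounds: `‖1̂_{B'_t} − 1̂_{−B'_t}‖₁ ≪ L²` and
`‖1̂_{C'_t} − 1̂_{−C'_t}‖₁ ≪ L²`. -/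
theorem l1_bounds_differences :
    ∃ C : ℝ, 0 < C ∧
      ∀ A' : Finset ℤ, (0 : ℤ) ∉ A' → (∀ a : ℤ, a ∈ A' ↔ -a ∈ A') →
        ∀ L : ℝ, 0 < L → (∀ x : ℝ, 0 ≤ (fhat A' x).re + L) →
          ∀ t : ℤ, t ≠ 0 →
            (∫ x in (0:ℝ)..1,
                ‖fhat (Bt A' t) x - fhat (negS (Bt A' t)) x‖) ≤ C * L ^ 2 ∧
            (∫ x in (0:ℝ)..1,
                ‖fhat (Ct A' t) x - fhat (negS (Ct A' t)) x‖) ≤ C * L ^ 2 := by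
  refine ⟨16, by norm_num, ?_⟩
  intro A' h0 hsym L hLpos hL t ht
  have hL2 : (0:ℝ) ≤ 16 * L ^ 2 := by positivity
  by_cases hA : A' = ∅
  · subst hA
    have hBt : Bt (∅ : Finset ℤ) t = ∅ := by
      simp [Bt, shiftS]
    have hCt : Ct (∅ : Finset ℤ) t = ∅ := by
      simp [Ct, shiftS]
    rw [hBt, hCt]
    have hneg : negS (∅ : Finset ℤ) = ∅ := by simp [negS]
    rw [hneg]
    have : (∫ x in (0:ℝ)..1, ‖fhat ∅ x - fhat ∅ x‖) = 0 := by
      simp [fhat]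
    rw [this]
    exact ⟨hL2, hL2⟩
  · have hne : A'.Nonempty := Finset.nonempty_iff_ne_empty.mpr hA
    set I1 : ℝ := ∫ x in (0:ℝ)..1, ‖fhat A' x‖ with hI1
    have hI1nn : 0 ≤ I1 :=
      intervalIntegral.integral_nonneg zero_le_one fun u _ => norm_nonneg _
    have hI12L : I1 ≤ 2 * L := l1_fhat_le A' h0 hsym L hLpos hL
    have h2L : 1 ≤ 2 * L := one_le_two_L A' h0 hsym hne L hLpos hL
    have hD : (∫ x in (0:ℝ)..1,
        ‖fhat (A' ∩ shiftS A' t) x - fhat (A' ∩ shiftS A' (-t)) x‖) ≤ 2 * I1 ^ 2 :=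
      D_bound A' t
    have hDcont : Continuous fun x : ℝ =>
        ‖fhat (A' ∩ shiftS A' t) x - fhat (A' ∩ shiftS A' (-t)) x‖ :=
      continuous_norm.comp ((continuous_fhat _).sub (continuous_fhat _))
    have hI1sq : 2 * I1 ^ 2 ≤ 8 * L ^ 2 := by nlinarith
    constructor
    · -- B part
      have hcongr : (∫ x in (0:ℝ)..1, ‖fhat (Bt A' t) x - fhat (negS (Bt A' t)) x‖)
          = ∫ x in (0:ℝ)..1,
              ‖fhat (A' ∩ shiftS A' t) x - fhat (A' ∩ shiftS A' (-t)) x‖ := by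
        refine intervalIntegral.integral_congr fun x _ => ?_
        rw [Bt_diff_eq hsym t x]
      rw [hcongr]
      linarith
    · -- C part
      have hpt : ∀ x : ℝ, ‖fhat (Ct A' t) x - fhat (negS (Ct A' t)) x‖
          ≤ 2 * ‖fhat A' x‖
            + ‖fhat (A' ∩ shiftS A' t) x - fhat (A' ∩ shiftS A' (-t)) x‖ := by
        intro x
        rw [Ct_diff_eq hsym t x]
        have htri : ‖(fhat (shiftS A' t) x - fhat (shiftS A' (-t)) x)
              - (fhat (A' ∩ shiftS A' t) x - fhat (A' ∩ shiftS A' (-t)) x)‖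
            ≤ ‖fhat (shiftS A' t) x - fhat (shiftS A' (-t)) x‖
              + ‖fhat (A' ∩ shiftS A' t) x - fhat (A' ∩ shiftS A' (-t)) x‖ := by
          have h := norm_sub_le (fhat (shiftS A' t) x - fhat (shiftS A' (-t)) x)
            (fhat (A' ∩ shiftS A' t) x - fhat (A' ∩ shiftS A' (-t)) x)
          simpa only using h
        have hsh : ‖fhat (shiftS A' t) x - fhat (shiftS A' (-t)) x‖
            ≤ 2 * ‖fhat A' x‖ := by
          rw [fhat_shiftS, fhat_shiftS, ← sub_mul, norm_mul]
          have := norm_sub_le (eC ((t:ℝ) * x)) (eC (((-t:ℤ):ℝ) * x))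
          simp only [abs_eC] at this
          have hnn : (0:ℝ) ≤ ‖fhat A' x‖ := norm_nonneg _
          nlinarith
        linarith
      have hc2 : Continuous fun x : ℝ => 2 * ‖fhat A' x‖ :=
        continuous_const.mul (continuous_norm.comp (continuous_fhat _))
      have hmono : (∫ x in (0:ℝ)..1, ‖fhat (Ct A' t) x - fhat (negS (Ct A' t)) x‖)
          ≤ ∫ x in (0:ℝ)..1, (2 * ‖fhat A' x‖
            + ‖fhat (A' ∩ shiftS A' t) x - fhat (A' ∩ shiftS A' (-t)) x‖) := by
        refine intervalIntegral.integral_mono_on zero_le_one ?_ ?_ fun x _ => hpt x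
        · exact (continuous_norm.comp
            ((continuous_fhat _).sub (continuous_fhat _))).intervalIntegrable _ _
        · exact (hc2.add hDcont).intervalIntegrable _ _
      have hsplit : (∫ x in (0:ℝ)..1, (2 * ‖fhat A' x‖
            + ‖fhat (A' ∩ shiftS A' t) x - fhat (A' ∩ shiftS A' (-t)) x‖))
          = 2 * I1 + ∫ x in (0:ℝ)..1,
              ‖fhat (A' ∩ shiftS A' t) x - fhat (A' ∩ shiftS A' (-t)) x‖ := by
        rw [intervalIntegral.integral_add (hc2.intervalIntegrable _ _)
          (hDcont.intervalIntegrable _ _), intervalIntegral.integral_const_mul]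
      have hfinal : 2 * I1 + 2 * I1 ^ 2 ≤ 16 * L ^ 2 := by nlinarith
      calc (∫ x in (0:ℝ)..1, ‖fhat (Ct A' t) x - fhat (negS (Ct A' t)) x‖)
          ≤ 2 * I1 + ∫ x in (0:ℝ)..1,
              ‖fhat (A' ∩ shiftS A' t) x - fhat (A' ∩ shiftS A' (-t)) x‖ := by
            rw [← hsplit]; exact hmono
        _ ≤ 2 * I1 + 2 * I1 ^ 2 := by linarith
        _ ≤ 16 * L ^ 2 := hfinal
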